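/- Let M₀ and M₁ be finite matroids on ground set E and let F₀, F₁ ⊆ E. Then there exists F ⊆ E such that for each i ∈ {0,1}: Fᵢ ⊆ span_{Mᵢ}(F) and E \ F_{1−i} ⊆ span_{Mᵢ*}(E \ F). -/

import Mathlib

open Set

namespace Matroid

variable {α : Type*}

/-- Finite exchange: if `e` is spanned by `S ∪ T` but not by `T`, some `s ∈ S` is spanned by
`insert e ((S ∪ T) \ {s})`. -/
lemma exch_aux (M : Matroid α) :
    ∀ (n : ℕ) (S T : Set α) (e : α), S.Finite → S.ncard ≤ n →
      e ∈ M.closure (S ∪ T) → e ∉ M.closure T →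
      ∃ s ∈ S, s ∈ M.closure (insert e ((S ∪ T) \ {s})) := by
  intro n
  induction n with
  | zero =>
    intro S T e hfin hcard he heT
    rw [Nat.le_zero, Set.ncard_eq_zero hfin] at hcard
    subst hcard
    simp only [empty_union] at he
    exact absurd he heT
  | succ n ih =>
    intro S T e hfin hcard he heT
    rcases S.eq_empty_or_nonempty with rfl | ⟨s, hs⟩
    · simp only [empty_union] at he
      exact absurd he heT
    by_cases hcase : e ∈ M.closure ((S \ {s}) ∪ T)
    · obtain ⟨s', hs', hmem⟩ := ih (S \ {s}) T e hfin.diff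
        (by
          have := Set.ncard_diff_singleton_lt_of_mem hs hfin
          omega) hcase heT
      refine ⟨s', hs'.1, M.closure_subset_closure (insert_subset_insert ?_) hmem⟩
      intro x hx
      exact ⟨Or.imp_left (fun h : x ∈ S \ {s} ↦ h.1) hx.1, hx.2⟩
    · have hsT : s ∉ T := by
        intro hsT
        apply hcase
        refine M.closure_subset_closure (fun x hx ↦ ?_) he
        rcases hx with hx | hx
        · by_cases hxs : x = s
          · exact Or.inr (hxs ▸ hsT)
          · exact Or.inl ⟨hx, hxs⟩
        · exact Or.inr hx
      have hins : S ∪ T = insert s ((S \ {s}) ∪ T) := by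
        ext x
        simp only [mem_union, mem_insert_iff, mem_diff, mem_singleton_iff]
        constructor
        · rintro (hx | hx)
          · by_cases hxs : x = s
            · exact Or.inl hxs
            · exact Or.inr (Or.inl ⟨hx, hxs⟩)
          · exact Or.inr (Or.inr hx)
        · rintro (rfl | ⟨⟨hx, _⟩ | hx⟩)
          · exact Or.inl hs
          · exact Or.inl hx
          · exact Or.inr hx
      have hex := M.closure_exchange (e := e) (f := s) (X := (S \ {s}) ∪ T)
        ⟨by rw [← hins]; exact he, hcase⟩
      refine ⟨s, hs, ?_⟩
      have : (S \ {s}) ∪ T = (S ∪ T) \ {s} := by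
        ext x
        simp only [mem_union, mem_diff, mem_singleton_iff]
        constructor
        · rintro (⟨hx, hxs⟩ | hx)
          · exact ⟨Or.inl hx, hxs⟩
          · exact ⟨Or.inr hx, fun h ↦ hsT (h ▸ hx)⟩
        · rintro ⟨hx | hx, hxs⟩
          · exact Or.inl ⟨hx, hxs⟩
          · exact Or.inr hx
      rw [← this]
      exact hex.1

/-- If `e ∈ F ⊆ M.E` and `e ∉ cl(F \ {e})`, then `e` is in the dual closure of `M.E \ F`. -/
lemma mem_dual_closure_of_not_mem_closure (M : Matroid α) [M.Finite] {F : Set α} {e : α}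
    (hF : F ⊆ M.E) (he : e ∈ F) (hcl : e ∉ M.closure (F \ {e})) :
    e ∈ M✶.closure (M.E \ F) := by
  have heE : e ∈ M.E := hF he
  obtain ⟨J, hJ⟩ := M.exists_isBasis (F \ {e}) (diff_subset.trans hF)
  have heJ' : e ∉ M.closure J := by rwa [hJ.closure_eq_closure]
  have heJ : e ∉ J := fun h ↦ (hJ.subset h).2 rfl
  have hIe : M.Indep (insert e J) := by
    rw [hJ.indep.insert_indep_iff_of_notMem heJ]
    exact ⟨heE, heJ'⟩
  have hbas : M.IsBasis (insert e J) F := by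
    refine hIe.isBasis_of_subset_of_subset_closure
      (insert_subset he ((hJ.subset).trans diff_subset)) (fun x hx ↦ ?_)
    by_cases hxe : x = e
    · exact hxe ▸ M.subset_closure _ hIe.subset_ground (mem_insert _ _)
    · exact M.closure_subset_closure (subset_insert _ _) (hJ.subset_closure ⟨hx, hxe⟩)
  obtain ⟨B, hB, hBF⟩ := hbas.exists_isBase
  have heB : e ∈ B := by have := hBF ▸ (mem_insert e J); exact this.1
  have hdual := hB.compl_inter_isBasis_of_inter_isBasis (X := F) (hBF ▸ hbas)
  rw [← hdual.closure_eq_closure]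
  rw [hdual.indep.mem_closure_iff_of_notMem (fun h ↦ h.2.2 he)]
  rw [dep_iff]
  refine ⟨fun hind ↦ ?_, insert_subset heE (inter_subset_left.trans diff_subset)⟩
  rw [dual_indep_iff_exists] at hind
  obtain ⟨B'', hB'', hdisj⟩ := hind
  have hB''sub : B'' ⊆ (B \ F) ∪ (F \ {e}) := by
    intro x hx
    have hxE : x ∈ M.E := hB''.subset_ground hx
    have hxne : x ∉ insert e ((M.E \ B) ∩ (M.E \ F)) := fun h ↦
      hdisj.ne_of_mem h hx rfl
    by_cases hxF : x ∈ F
    · exact Or.inr ⟨hxF, fun h ↦ hxne (h ▸ mem_insert _ _)⟩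
    · refine Or.inl ⟨?_, hxF⟩
      by_contra hxB
      exact hxne (Or.inr ⟨⟨hxE, hxB⟩, ⟨hxE, hxF⟩⟩)
  have heBcl : e ∈ M.closure ((B \ F) ∪ (F \ {e})) :=
    M.closure_subset_closure hB''sub (hB''.closure_eq ▸ heE)
  obtain ⟨s, hs, hscl⟩ := M.exch_aux (B \ F).ncard (B \ F) (F \ {e}) e
    (M.set_finite _ (diff_subset.trans hB.subset_ground)) le_rfl heBcl hcl
  have hssub : insert e (((B \ F) ∪ (F \ {e})) \ {s}) ⊆ M.closure (B \ {s}) := by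
    have hBsE : B \ {s} ⊆ M.E := diff_subset.trans hB.subset_ground
    refine insert_subset (M.subset_closure _ hBsE ⟨heB, fun h ↦ hs.2 (h ▸ he)⟩) ?_
    rintro x ⟨hx | hx, hxs⟩
    · exact M.subset_closure _ hBsE ⟨hx.1, hxs⟩
    · have : x ∈ M.closure (insert e J) := hbas.subset_closure hx.1
      refine M.closure_subset_closure ?_ this
      rw [hBF]
      exact fun y hy ↦ ⟨hy.1, fun h ↦ hs.2 (h ▸ hy.2)⟩
  have : s ∈ M.closure (B \ {s}) :=
    M.closure_closure (B \ {s}) ▸ M.closure_subset_closure hssub hscl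
  exact hB.indep.notMem_closure_sdiff_of_mem hs.1 this

/-- Relative basis: shrink `W` to `B` spanning the same as `K ∪ W` over `K`, with each element
of `B` not spanned by the rest. -/
lemma exists_rel_basis (M : Matroid α) {K W : Set α} (hK : K ⊆ M.E) (hW : W ⊆ M.E) :
    ∃ B ⊆ W, Disjoint B K ∧ M.closure (K ∪ B) = M.closure (K ∪ W) ∧
      ∀ b ∈ B, b ∉ M.closure ((K ∪ B) \ {b}) := by
  obtain ⟨J₀, hJ₀⟩ := M.exists_isBasis K hK
  obtain ⟨J, hJ, hJ₀J⟩ := hJ₀.indep.subset_isBasis_of_subset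
    (hJ₀.subset.trans subset_union_left) (union_subset hK hW)
  have hJK : J ∩ K = J₀ :=
    (hJ₀.eq_of_subset_indep (hJ.indep.subset inter_subset_left)
      (subset_inter hJ₀J hJ₀.subset) inter_subset_right).symm
  set B := J \ K with hB
  have hJsub : J ⊆ K ∪ B := fun x hx ↦ by
    by_cases hxK : x ∈ K
    · exact Or.inl hxK
    · exact Or.inr ⟨hx, hxK⟩
  refine ⟨B, fun x hx ↦ (hJ.subset hx.1).elim (fun h ↦ absurd h hx.2) id,
    disjoint_sdiff_left, ?_, ?_⟩
  · apply subset_antisymm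
    · exact M.closure_subset_closure (union_subset subset_union_left
        (fun x hx ↦ Or.inr ((hJ.subset hx.1).elim (fun h ↦ absurd h hx.2) id)))
    · refine M.closure_subset_closure_of_subset_closure (fun x hx ↦ ?_)
      exact M.closure_subset_closure hJsub (hJ.subset_closure hx)
  · intro b hb hbcl
    have hbJ : b ∈ J := hb.1
    have hJ₀sub : J₀ ⊆ J \ {b} := fun x hx ↦ ⟨hJ₀J hx, fun h ↦ hb.2 (h ▸ hJ₀.subset hx)⟩
    have h1 : (K ∪ B) \ {b} ⊆ M.closure (J \ {b}) := by
      rintro x ⟨hx | hx, hxb⟩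
      · exact M.closure_subset_closure hJ₀sub (hJ₀.subset_closure hx)
      · exact M.subset_closure _ (diff_subset.trans hJ.indep.subset_ground) ⟨hx.1, hxb⟩
    have : b ∈ M.closure (J \ {b}) :=
      M.closure_closure _ ▸ M.closure_subset_closure_of_subset_closure h1 hbcl
    exact hJ.indep.notMem_closure_sdiff_of_mem hbJ this

end Matroid

/-- **Cantor–Bernstein for arbitrary edge sets (finite case).** For finite matroids `M₀, M₁`
on `E` and `F₀, F₁ ⊆ E`, there is `F ⊆ E` with `Fᵢ ⊆ span_{Mᵢ}(F)` and
`E \ F_{1−i} ⊆ span_{Mᵢ*}(E \ F)` for `i ∈ {0,1}`. -/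
theorem cantor_bernstein_sets {α : Type*} (M₀ M₁ : Matroid α) [M₀.Finite] [M₁.Finite]
    {E : Set α} (hE₀ : M₀.E = E) (hE₁ : M₁.E = E)
    (F₀ F₁ : Set α) (hF₀ : F₀ ⊆ E) (hF₁ : F₁ ⊆ E) :
    ∃ F ⊆ E, F₀ ⊆ M₀.closure F ∧ F₁ ⊆ M₁.closure F ∧
      E \ F₁ ⊆ M₀✶.closure (E \ F) ∧ E \ F₀ ⊆ M₁✶.closure (E \ F) := by
  classical
  have hEfin : E.Finite := hE₀ ▸ M₀.ground_finite
  set A : Set α := F₀ ∩ F₁ with hA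
  set X : Set α := F₀ \ F₁ with hX
  set Y : Set α := F₁ \ F₀ with hY
  have hAE : A ⊆ E := (inter_subset_left).trans hF₀
  have hXE : X ⊆ E := diff_subset.trans hF₀
  have hYE : Y ⊆ E := diff_subset.trans hF₁
  set Q : Set α → Set α → Prop := fun B C ↦ B ⊆ X ∧ C ⊆ Y ∧
      X ⊆ M₀.closure (A ∪ B ∪ C) ∧
      (∀ b ∈ B, b ∉ M₀.closure ((A ∪ B ∪ C) \ {b})) ∧
      (∀ c ∈ C, c ∉ M₁.closure ((A ∪ B ∪ C) \ {c})) with hQdef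
  -- initialisation
  have hinit : ∃ B C, Q B C := by
    obtain ⟨B₀, hB₀X, _, hclB₀, hptB₀⟩ :=
      M₀.exists_rel_basis (K := A) (W := X) (hE₀ ▸ hAE) (hE₀ ▸ hXE)
    refine ⟨B₀, ∅, hB₀X, empty_subset _, ?_, ?_, by simp⟩
    · rw [union_empty, hclB₀]
      exact subset_union_right.trans (M₀.subset_closure (A ∪ X) (hE₀ ▸ union_subset hAE hXE))
    · intro b hb
      rw [union_empty]
      exact hptB₀ b hb
  -- choose a pair with maximal |C|
  set N : Set ℕ := {n | ∃ B C, Q B C ∧ C.ncard = n} with hN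
  have hNne : N.Nonempty := by
    obtain ⟨B, C, hQBC⟩ := hinit
    exact ⟨C.ncard, B, C, hQBC, rfl⟩
  have hNbdd : BddAbove N := by
    refine ⟨E.ncard, fun n hn ↦ ?_⟩
    obtain ⟨B, C, hQBC, rfl⟩ := hn
    exact Set.ncard_le_ncard (hQBC.2.1.trans hYE) hEfin
  obtain ⟨B, C, hQBC, hCcard⟩ := Nat.sSup_mem hNne hNbdd
  obtain ⟨hBX, hCY, hXcl, hBpt, hCpt⟩ := hQBC
  have hBE : B ⊆ E := hBX.trans hXE
  have hCE : C ⊆ E := hCY.trans hYE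
  have hFE : A ∪ B ∪ C ⊆ E := union_subset (union_subset hAE hBE) hCE
  -- maximality gives that Y is spanned
  have hYcl : Y ⊆ M₁.closure (A ∪ B ∪ C) := by
    by_contra hcon
    obtain ⟨y, hyY, hycl⟩ := not_subset.1 hcon
    have hyE : y ∈ E := hYE hyY
    have hynotin : y ∉ A ∪ B ∪ C := fun h ↦
      hycl (M₁.subset_closure _ (hE₁ ▸ hFE) h)
    set K : Set α := (A ∪ C) ∪ {y} with hK
    have hKE : K ⊆ E := union_subset (union_subset hAE hCE) (singleton_subset_iff.2 hyE)
    obtain ⟨B', hB'B, hB'K, hclB', hptB'⟩ :=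
      M₀.exists_rel_basis (K := K) (W := B) (hE₀ ▸ hKE) (hE₀ ▸ hBE)
    have hB'X : B' ⊆ X := hB'B.trans hBX
    have hset : A ∪ B' ∪ insert y C = K ∪ B' := by
      ext x
      simp only [hK, mem_union, mem_insert_iff, mem_singleton_iff]
      tauto
    have hABC_sub : A ∪ B ∪ C ⊆ K ∪ B := by
      rintro x ((hx | hx) | hx)
      · exact Or.inl (Or.inl (Or.inl hx))
      · exact Or.inr hx
      · exact Or.inl (Or.inl (Or.inr hx))
    have hQ' : Q B' (insert y C) := by
      refine ⟨hB'X, insert_subset hyY hCY, ?_, ?_, ?_⟩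
      · rw [hset, hclB']
        exact hXcl.trans (M₀.closure_subset_closure hABC_sub)
      · intro b hb
        rw [hset]
        exact hptB' b hb
      · intro c hc
        rcases hc with rfl | hcC
        · -- c = y
          intro hmem
          apply hycl
          refine M₁.closure_subset_closure ?_ hmem
          rintro x ⟨hx, hxy⟩
          rcases hx with (hx | hx) | hx
          · exact Or.inl (Or.inl hx)
          · exact Or.inl (Or.inr (hB'B hx))
          · rcases hx with rfl | hx
            · exact absurd rfl hxy
            · exact Or.inr hx
        · -- c ∈ C
          intro hmem
          have hyc : y ≠ c := fun h ↦ hynotin (Or.inr (h ▸ hcC))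
          set T : Set α := (A ∪ B' ∪ C) \ {c} with hT
          have hTsub : T ⊆ (A ∪ B ∪ C) \ {c} := by
            rintro x ⟨hx, hxc⟩
            refine ⟨?_, hxc⟩
            rcases hx with (hx | hx) | hx
            · exact Or.inl (Or.inl hx)
            · exact Or.inl (Or.inr (hB'B hx))
            · exact Or.inr hx
          have hcT : c ∉ M₁.closure T := fun h ↦
            hCpt c hcC (M₁.closure_subset_closure hTsub h)
          have hmem' : c ∈ M₁.closure (insert y T) := by
            refine M₁.closure_subset_closure ?_ hmem
            rintro x ⟨hx, hxc⟩
            rcases hx with (hx | hx) | hx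
            · exact Or.inr ⟨Or.inl (Or.inl hx), hxc⟩
            · exact Or.inr ⟨Or.inl (Or.inr hx), hxc⟩
            · rcases hx with rfl | hx
              · exact Or.inl rfl
              · exact Or.inr ⟨Or.inr hx, hxc⟩
          have hex := M₁.closure_exchange (e := c) (f := y) (X := T) ⟨hmem', hcT⟩
          apply hycl
          refine M₁.closure_subset_closure ?_ hex.1
          rintro x (rfl | ⟨hx, _⟩)
          · exact Or.inr hcC
          · rcases hx with (hx | hx) | hx
            · exact Or.inl (Or.inl hx)
            · exact Or.inl (Or.inr (hB'B hx))
            · exact Or.inr hx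
    have hyC : y ∉ C := fun h ↦ hynotin (Or.inr h)
    have hcard' : (insert y C).ncard = C.ncard + 1 :=
      Set.ncard_insert_of_notMem hyC (hEfin.subset hCE)
    have : (insert y C).ncard ∈ N := ⟨B', insert y C, hQ', rfl⟩
    have hle := le_csSup hNbdd this
    rw [hcard', hCcard] at hle
    omega
  -- final assembly
  refine ⟨A ∪ B ∪ C, hFE, ?_, ?_, ?_, ?_⟩
  · intro x hx
    by_cases hx1 : x ∈ F₁
    · exact M₀.subset_closure _ (hE₀ ▸ hFE) (Or.inl (Or.inl ⟨hx, hx1⟩))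
    · exact hXcl ⟨hx, hx1⟩
  · intro x hx
    by_cases hx0 : x ∈ F₀
    · exact M₁.subset_closure _ (hE₁ ▸ hFE) (Or.inl (Or.inl ⟨hx0, hx⟩))
    · exact hYcl ⟨hx, hx0⟩
  · rintro e ⟨heE, heF₁⟩
    by_cases heF : e ∈ A ∪ B ∪ C
    · have heB : e ∈ B := by
        rcases heF with (h | h) | h
        · exact absurd h.2 heF₁
        · exact h
        · exact absurd (hCY h).1 heF₁
      have := M₀.mem_dual_closure_of_not_mem_closure (hE₀ ▸ hFE) heF (hBpt e heB)
      rwa [hE₀] at this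
    · exact M₀✶.subset_closure _ (by rw [Matroid.dual_ground, hE₀]; exact diff_subset) ⟨heE, heF⟩
  · rintro e ⟨heE, heF₀⟩
    by_cases heF : e ∈ A ∪ B ∪ C
    · have heC : e ∈ C := by
        rcases heF with (h | h) | h
        · exact absurd h.1 heF₀
        · exact absurd (hBX h).1 heF₀
        · exact h
      have := M₁.mem_dual_closure_of_not_mem_closure (hE₁ ▸ hFE) heF (hCpt e heC)
      rwa [hE₁] at this
    · exact M₁✶.subset_closure _ (by rw [Matroid.dual_ground, hE₁]; exact diff_subset) ⟨heE, heF⟩
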